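/- Let S : ℝ → ℝ be convex and continuously differentiable with bounded derivative, and let α ∈ ℝ. Let f ∈ L¹(ℝ) satisfy 0 ≤ f(ξ) ≤ 1 for almost every ξ > 0, −1 ≤ f(ξ) ≤ 0 for almost every ξ < 0, and ∫_ℝ f(ξ) dξ = α. Then ∫_ℝ S′(ξ) f(ξ) dξ ≥ ∫_ℝ S′(ξ) χ(ξ, α) dξ = S(α) − S(0). Moreover, if S is strictly convex and equality holds, then f(ξ) = χ(ξ, α) for almost every ξ ∈ ℝ. -/

import Mathlib

open MeasureTheory

/-- The kinetic function `χ(ξ,u)`: equal to `1` for `0 < ξ < u`, `−1` for `u < ξ < 0`,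
and `0` otherwise. -/
noncomputable def kineticChi (ξ u : ℝ) : ℝ :=
  if 0 < ξ ∧ ξ < u then 1 else if u < ξ ∧ ξ < 0 then -1 else 0

lemma mul_chi_nonneg (g : ℝ → ℝ) {α : ℝ} (hα : 0 ≤ α) (ξ : ℝ) :
    g ξ * kineticChi ξ α = Set.indicator (Set.Ioo (0:ℝ) α) g ξ := by
  unfold kineticChi
  by_cases h : 0 < ξ ∧ ξ < α
  · simp [h, Set.indicator, Set.mem_Ioo]
  · have h2 : ¬ (α < ξ ∧ ξ < 0) := by
      rintro ⟨h1, h2⟩; exact absurd (hα.trans_lt (h1.trans h2)) (lt_irrefl 0)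
    simp [h, h2, Set.indicator, Set.mem_Ioo]

lemma mul_chi_nonpos (g : ℝ → ℝ) {α : ℝ} (hα : α ≤ 0) (ξ : ℝ) :
    g ξ * kineticChi ξ α = Set.indicator (Set.Ioo α 0) (fun x => -g x) ξ := by
  unfold kineticChi
  by_cases h : α < ξ ∧ ξ < 0
  · have h1 : ¬ (0 < ξ ∧ ξ < α) := by
      rintro ⟨h1, h2⟩; exact absurd ((h1.trans h2).trans_le hα) (lt_irrefl 0)
    simp [h, h1, Set.indicator, Set.mem_Ioo]
  · have h1 : ¬ (0 < ξ ∧ ξ < α) := by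
      rintro ⟨h1', h2'⟩; exact absurd ((h1'.trans h2').trans_le hα) (lt_irrefl 0)
    simp [h, h1, Set.indicator, Set.mem_Ioo]

lemma integrable_mul_chi {g : ℝ → ℝ} (hg : Continuous g) (α : ℝ) :
    Integrable (fun ξ => g ξ * kineticChi ξ α) := by
  rcases le_total 0 α with hα | hα
  · have : (fun ξ => g ξ * kineticChi ξ α) = Set.indicator (Set.Ioo (0:ℝ) α) g := by
      funext ξ; exact mul_chi_nonneg g hα ξ
    rw [this, integrable_indicator_iff measurableSet_Ioo]
    exact (hg.integrableOn_Icc).mono_set Set.Ioo_subset_Icc_self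
  · have : (fun ξ => g ξ * kineticChi ξ α) = Set.indicator (Set.Ioo α 0) (fun x => -g x) := by
      funext ξ; exact mul_chi_nonpos g hα ξ
    rw [this, integrable_indicator_iff measurableSet_Ioo]
    exact ((hg.neg).integrableOn_Icc).mono_set Set.Ioo_subset_Icc_self

lemma integral_mul_chi (g : ℝ → ℝ) (α : ℝ) :
    ∫ ξ, g ξ * kineticChi ξ α = ∫ x in (0:ℝ)..α, g x := by
  rcases le_total 0 α with hα | hα
  · simp_rw [mul_chi_nonneg g hα]
    rw [integral_indicator measurableSet_Ioo, intervalIntegral.integral_of_le hα,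
      integral_Ioc_eq_integral_Ioo]
  · simp_rw [mul_chi_nonpos g hα]
    rw [integral_indicator measurableSet_Ioo,
      intervalIntegral.integral_symm, intervalIntegral.integral_of_le hα,
      integral_Ioc_eq_integral_Ioo, integral_neg]

/-- Brenier's minimization principle: over the class of `f ∈ L¹(ℝ)` with
`0 ≤ f ≤ 1` on `(0,∞)`, `−1 ≤ f ≤ 0` on `(−∞,0)` and `∫ f = α`, the kinetic function
`χ(·,α)` minimizes `f ↦ ∫ S′(ξ)f(ξ)dξ` for every convex `C¹` function `S` with bounded
derivative, the minimum value being `S(α) − S(0)`; for strictly convex `S` the minimizer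
is unique (almost everywhere). -/
theorem brenier_kinetic_minimization
    (S : ℝ → ℝ) (hconv : ConvexOn ℝ Set.univ S) (hS : ContDiff ℝ 1 S)
    (hbd : ∃ C : ℝ, ∀ ξ : ℝ, |deriv S ξ| ≤ C)
    (α : ℝ) (f : ℝ → ℝ) (hf : Integrable f)
    (hpos : ∀ᵐ ξ : ℝ, 0 < ξ → 0 ≤ f ξ ∧ f ξ ≤ 1)
    (hneg : ∀ᵐ ξ : ℝ, ξ < 0 → -1 ≤ f ξ ∧ f ξ ≤ 0)
    (hint : ∫ ξ : ℝ, f ξ = α) :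
    (∫ ξ : ℝ, deriv S ξ * kineticChi ξ α) = S α - S 0 ∧
    S α - S 0 ≤ ∫ ξ : ℝ, deriv S ξ * f ξ ∧
    (StrictConvexOn ℝ Set.univ S → (∫ ξ : ℝ, deriv S ξ * f ξ) = S α - S 0 →
      f =ᵐ[volume] fun ξ => kineticChi ξ α) := by
  obtain ⟨C, hC⟩ := hbd
  have hdiff : Differentiable ℝ S := hS.differentiable one_ne_zero
  have hcont : Continuous (deriv S) := hS.continuous_deriv le_rfl
  have hmono : Monotone (deriv S) := by
    have := hconv.monotoneOn_deriv (fun x _ => hdiff x)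
    exact monotoneOn_univ.mp this
  set c : ℝ := deriv S α with hc
  -- FTC value
  have hFTC : (∫ ξ : ℝ, deriv S ξ * kineticChi ξ α) = S α - S 0 := by
    rw [integral_mul_chi (deriv S) α]
    exact intervalIntegral.integral_deriv_eq_sub (fun x _ => hdiff x)
      (hcont.intervalIntegrable 0 α)
  -- integral of chi is α
  have hchiInt : (∫ ξ : ℝ, kineticChi ξ α) = α := by
    have := integral_mul_chi (fun _ => (1:ℝ)) α
    simpa using this
  -- integrability facts
  have hI1 : Integrable (fun ξ => deriv S ξ * f ξ) := by
    refine hf.bdd_mul (c := C) hcont.aestronglyMeasurable (Filter.Eventually.of_forall fun x => ?_)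
    simpa [Real.norm_eq_abs] using hC x
  have hI2 : Integrable (fun ξ => deriv S ξ * kineticChi ξ α) :=
    integrable_mul_chi hcont α
  have hI3 : Integrable (fun ξ => kineticChi ξ α) := by
    have := integrable_mul_chi continuous_const (g := fun _ => (1:ℝ)) α
    simpa using this
  -- the nonnegative integrand
  set F : ℝ → ℝ := fun ξ => (deriv S ξ - c) * (f ξ - kineticChi ξ α) with hF
  have hIF : Integrable F := by
    have : F = fun ξ => (deriv S ξ * f ξ - deriv S ξ * kineticChi ξ α)
        - (c * f ξ - c * kineticChi ξ α) := by
      funext ξ; simp only [hF]; ring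
    rw [this]
    exact ((hI1.sub hI2).sub ((hf.const_mul c).sub (hI3.const_mul c)))
  have h0ne : ∀ᵐ ξ : ℝ, ξ ≠ (0:ℝ) := by
    rw [ae_iff]; simpa using measure_singleton (0:ℝ)
  have hFnonneg : ∀ᵐ ξ : ℝ, 0 ≤ F ξ := by
    filter_upwards [hpos, hneg, h0ne] with ξ hp hn h0
    show 0 ≤ (deriv S ξ - c) * (f ξ - kineticChi ξ α)
    rcases lt_trichotomy ξ 0 with hξ | rfl | hξ
    · obtain ⟨h1, h2⟩ := hn hξ
      rcases lt_or_ge α ξ with hαξ | hαξ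
      · have hchi : kineticChi ξ α = -1 := by
          have : ¬ (0 < ξ ∧ ξ < α) := by rintro ⟨h, _⟩; exact absurd (h.trans hξ) (lt_irrefl 0)
          simp [kineticChi, this, hαξ, hξ]
        rw [hchi]
        exact mul_nonneg (sub_nonneg.mpr (hmono hαξ.le)) (by linarith)
      · have hchi : kineticChi ξ α = 0 := by
          have h1' : ¬ (0 < ξ ∧ ξ < α) := by rintro ⟨h, _⟩; exact absurd (h.trans hξ) (lt_irrefl 0)
          have h2' : ¬ (α < ξ ∧ ξ < 0) := by rintro ⟨h, _⟩; exact absurd (hαξ.trans_lt h) (lt_irrefl ξ)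
          simp [kineticChi, h1', h2']
        rw [hchi]
        exact mul_nonneg_of_nonpos_of_nonpos (sub_nonpos.mpr (hmono hαξ)) (by linarith)
    · exact absurd rfl h0
    · obtain ⟨h1, h2⟩ := hp hξ
      rcases lt_or_ge ξ α with hαξ | hαξ
      · have hchi : kineticChi ξ α = 1 := by simp [kineticChi, hξ, hαξ]
        rw [hchi]
        exact mul_nonneg_of_nonpos_of_nonpos (sub_nonpos.mpr (hmono hαξ.le)) (by linarith)
      · have hchi : kineticChi ξ α = 0 := by
          have h1' : ¬ (0 < ξ ∧ ξ < α) := by rintro ⟨_, h⟩; exact absurd (hαξ.trans_lt h) (lt_irrefl α)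
          have h2' : ¬ (α < ξ ∧ ξ < 0) := by rintro ⟨_, h⟩; exact absurd (hξ.trans h) (lt_irrefl 0)
          simp [kineticChi, h1', h2']
        rw [hchi]
        exact mul_nonneg (sub_nonneg.mpr (hmono hαξ)) (by linarith)
  -- value of ∫ F
  have hIFval : ∫ ξ, F ξ = (∫ ξ : ℝ, deriv S ξ * f ξ) - (S α - S 0) := by
    have heq : F = fun ξ => (deriv S ξ * f ξ - deriv S ξ * kineticChi ξ α)
        - (c * f ξ - c * kineticChi ξ α) := by
      funext ξ; simp only [hF]; ring
    have hA : Integrable (fun ξ => deriv S ξ * f ξ - deriv S ξ * kineticChi ξ α) := hI1.sub hI2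
    have hB : Integrable (fun ξ => c * f ξ - c * kineticChi ξ α) :=
      (hf.const_mul c).sub (hI3.const_mul c)
    have hC' : Integrable (fun x => c * f x) := hf.const_mul c
    have hD : Integrable (fun x => c * kineticChi x α) := hI3.const_mul c
    simp only [heq]
    rw [integral_sub hA hB, integral_sub hI1 hI2, integral_sub hC' hD,
      integral_const_mul, integral_const_mul, hint, hchiInt, hFTC]
    ring
  have hle : S α - S 0 ≤ ∫ ξ : ℝ, deriv S ξ * f ξ := by
    have := integral_nonneg_of_ae hFnonneg
    linarith [hIFval ▸ this]
  refine ⟨hFTC, hle, ?_⟩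
  intro hstrict heq
  have hsm : StrictMono (deriv S) := by
    have := hstrict.strictMonoOn_deriv (fun x _ => hdiff x)
    exact strictMonoOn_univ.mp this
  have hF0 : F =ᵐ[volume] 0 := by
    have h0 : ∫ ξ, F ξ = 0 := by rw [hIFval, heq]; ring
    exact (integral_eq_zero_iff_of_nonneg_ae hFnonneg hIF).mp h0
  have hαne : ∀ᵐ ξ : ℝ, ξ ≠ α := by
    rw [ae_iff]
    simpa using measure_singleton α
  filter_upwards [hF0, hαne] with ξ h1 h2
  have hfac : deriv S ξ - c ≠ 0 := by
    intro h
    exact h2 (hsm.injective (by linarith [sub_eq_zero.mp h]))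
  have : (deriv S ξ - c) * (f ξ - kineticChi ξ α) = 0 := h1
  rcases mul_eq_zero.mp this with h | h
  · exact absurd h hfac
  · exact sub_eq_zero.mp h
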